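/- For the Mallows-weighted game of best choice, the weighted count W(N,k) of k-winnable permutations (weighting by θ^{inv}) satisfies W(N,k) = θ·[N−1]_θ·W(N−1,k) + θ^{N−k−1}·[k]_θ·[N−2]_θ!, for 1 ≤ k < N, with W(1,0) = 1 and W(N,N) = 0. -/

import Mathlib

/-- Number of left-to-right maxima of the permutation `π` (one-line notation
`i ↦ π i`): positions `j` such that `π i < π j` for all `i < j`. -/
def lrmaxCount {N : ℕ} (π : Equiv.Perm (Fin N)) : ℕ :=
  (Finset.univ.filter (fun j : Fin N => ∀ i, i < j → π i < π j)).card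

/-- Number of inversions of `π`: pairs of positions `i < j` with `π i > π j`. -/
def invCount {N : ℕ} (π : Equiv.Perm (Fin N)) : ℕ :=
  (Finset.univ.filter (fun p : Fin N × Fin N => p.1 < p.2 ∧ π p.2 < π p.1)).card

/-- Position `j` is a left-to-right maximum of `π`. -/
def IsLRMax {N : ℕ} (π : Equiv.Perm (Fin N)) (j : Fin N) : Prop :=
  ∀ i, i < j → π i < π j

/-- `π` is `k`-winnable: the positional strategy that rejects the first `k`
candidates (positions `0,…,k-1`) and accepts the next left-to-right maximum
thereafter selects the position of the maximal value. -/
def KWinnable {N : ℕ} (k : ℕ) (π : Equiv.Perm (Fin N)) : Prop :=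
  ∃ j : Fin N, k ≤ (j : ℕ) ∧ IsLRMax π j ∧ (∀ i, π i ≤ π j) ∧
    ∀ i : Fin N, k ≤ (i : ℕ) → i < j → ¬ IsLRMax π i

open Classical in
/-- Ewens-weighted count of `k`-winnable permutations:
`W(N,k) = Σ_{k-winnable π ∈ S_N} θ^{lrmax(π)}`. -/
noncomputable def W (R : Type*) [CommRing R] (N k : ℕ) (θ : R) : R :=
  ∑ π ∈ Finset.univ.filter (fun π : Equiv.Perm (Fin N) => KWinnable k π),
    θ ^ lrmaxCount π

/-- θ-analogue `[n]_θ = 1 + θ + ⋯ + θ^{n-1}`. -/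
def tA (n : ℕ) (θ : ℝ) : ℝ := ∑ m ∈ Finset.range n, θ ^ m

/-- θ-factorial `[m]_θ! = [m]_θ [m-1]_θ ⋯ [1]_θ`. -/
def qfact (m : ℕ) (θ : ℝ) : ℝ := ∏ n ∈ Finset.range m, tA (n + 1) θ

open Classical in
/-- Mallows-weighted count of `k`-winnable permutations:
`W(N,k) = Σ_{k-winnable π ∈ S_N} θ^{inv(π)}`. -/
noncomputable def WM (N k : ℕ) (θ : ℝ) : ℝ :=
  ∑ π ∈ Finset.univ.filter (fun π : Equiv.Perm (Fin N) => KWinnable k π),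
    θ ^ invCount π


open Equiv Finset

variable {M : ℕ}

theorem Equiv.Perm.inv_apply_self {α : Type*} (f : Equiv.Perm α) (x : α) : f⁻¹ (f x) = x :=
  f.symm_apply_apply x

theorem Equiv.Perm.apply_inv_self {α : Type*} (f : Equiv.Perm α) (x : α) : f (f⁻¹ x) = x :=
  f.apply_symm_apply x

/-- Insert: position `a` gets value `b`; other positions/values shift. -/
def ins (a b : Fin (M+1)) (τ : Equiv.Perm (Fin M)) : Equiv.Perm (Fin (M+1)) :=
  ((finSuccEquiv' a).trans (τ.optionCongr)).trans (finSuccEquiv' b).symm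

@[simp] lemma ins_apply_self (a b : Fin (M+1)) (τ : Equiv.Perm (Fin M)) : ins a b τ a = b := by
  simp [ins, finSuccEquiv'_at]

@[simp] lemma ins_apply_succAbove (a b : Fin (M+1)) (τ : Equiv.Perm (Fin M)) (i : Fin M) :
    ins a b τ (a.succAbove i) = b.succAbove (τ i) := by
  simp [ins, finSuccEquiv'_succAbove, finSuccEquiv'_symm_some]

lemma ins_bijective (b : Fin (M+1)) :
    Function.Bijective (fun x : Fin (M+1) × Equiv.Perm (Fin M) => ins x.1 b x.2) := by
  constructor
  · rintro ⟨a, τ⟩ ⟨a', τ'⟩ h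
    simp only at h
    have ha : a = a' := by
      have h1 : ins a b τ a = b := ins_apply_self a b τ
      have h2 : ins a' b τ' a' = b := ins_apply_self a' b τ'
      rw [h] at h1
      exact (ins a' b τ').injective (h1.trans h2.symm)
    subst ha
    have hτ : τ = τ' := by
      ext i
      have := congrArg (fun σ : Equiv.Perm (Fin (M+1)) => σ (a.succAbove i)) h
      simp only [ins_apply_succAbove] at this
      exact congrArg Fin.val (Fin.succAbove_right_injective this)
    rw [hτ]
  · intro σ
    set a : Fin (M+1) := σ.symm b with ha
    have hσa : σ a = b := σ.apply_symm_apply b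
    set e : Option (Fin M) ≃ Option (Fin M) :=
      ((finSuccEquiv' a).symm.trans (σ.trans (finSuccEquiv' b))) with he
    have hnone : e none = none := by
      simp [he, finSuccEquiv'_symm_none, hσa, finSuccEquiv'_at]
    refine ⟨⟨a, Equiv.removeNone e⟩, ?_⟩
    simp only
    ext x
    rcases eq_or_ne x a with rfl | hx
    · rw [ins_apply_self, hσa]
    · obtain ⟨i, rfl⟩ := Fin.exists_succAbove_eq hx
      rw [ins_apply_succAbove]
      have hex : ∃ y, e (some i) = some y := by
        cases h3 : e (some i) with
        | none =>
          have : (some i : Option (Fin M)) = none := e.injective (h3.trans hnone.symm)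
          simp at this
        | some y => exact ⟨y, rfl⟩
      have hsome : e (some i) = some (Equiv.removeNone e i) :=
        (Equiv.removeNone_some e hex).symm
      have : finSuccEquiv' b (σ (a.succAbove i)) = some (Equiv.removeNone e i) := by
        rw [← hsome]; simp [he, finSuccEquiv'_symm_some]
      have h4 : σ (a.succAbove i) = b.succAbove (Equiv.removeNone e i) := by
        have := congrArg (finSuccEquiv' b).symm this
        simpa [finSuccEquiv'_symm_some] using this
      rw [h4]

lemma invCount_ins_zero (a : Fin (M+1)) (τ : Equiv.Perm (Fin M)) :
    invCount (ins a 0 τ) = a + invCount τ := by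
  classical
  set σ := ins a 0 τ with hσ
  have hvs : ∀ i, σ (a.succAbove i) = (τ i).succ := by
    intro i; rw [hσ, ins_apply_succAbove]; exact Fin.zero_succAbove _
  have hset : (univ.filter (fun p : Fin (M+1) × Fin (M+1) => p.1 < p.2 ∧ σ p.2 < σ p.1))
      = ((Finset.Iio a).image (fun x => (x, a))) ∪
        ((univ.filter (fun p : Fin M × Fin M => p.1 < p.2 ∧ τ p.2 < τ p.1)).image
          (fun p => (a.succAbove p.1, a.succAbove p.2))) := by
    ext ⟨x, y⟩
    simp only [mem_filter, mem_univ, true_and, mem_union, mem_image, Finset.mem_Iio, Prod.mk.injEq,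
      Prod.exists]
    constructor
    · rintro ⟨hlt, hinv⟩
      rcases eq_or_ne y a with rfl | hy
      · exact Or.inl ⟨x, hlt, rfl, rfl⟩
      · obtain ⟨j, rfl⟩ := Fin.exists_succAbove_eq hy
        have hx : x ≠ a := by
          rintro rfl
          rw [ins_apply_self] at hinv
          exact Fin.not_lt_zero _ hinv
        obtain ⟨i, rfl⟩ := Fin.exists_succAbove_eq hx
        refine Or.inr ⟨i, j, ⟨?_, ?_⟩, rfl, rfl⟩
        · exact (Fin.succAbove_lt_succAbove_iff).mp hlt
        · rw [hvs, hvs] at hinv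
          exact (Fin.succ_lt_succ_iff).mp hinv
    · rintro (⟨x', hx', rfl, rfl⟩ | ⟨i, j, ⟨hij, hji⟩, rfl, rfl⟩)
      · refine ⟨hx', ?_⟩
        rw [ins_apply_self]
        have hx : x' ≠ a := ne_of_lt hx'
        obtain ⟨i, rfl⟩ := Fin.exists_succAbove_eq hx
        rw [hvs]
        exact Fin.succ_pos _
      · refine ⟨(Fin.succAbove_lt_succAbove_iff).mpr hij, ?_⟩
        rw [hvs, hvs]
        exact (Fin.succ_lt_succ_iff).mpr hji
  have hdisj : Disjoint ((Finset.Iio a).image (fun x => (x, a)))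
      ((univ.filter (fun p : Fin M × Fin M => p.1 < p.2 ∧ τ p.2 < τ p.1)).image
        (fun p => (a.succAbove p.1, a.succAbove p.2))) := by
    rw [Finset.disjoint_left]
    rintro ⟨x, y⟩ h1 h2
    simp only [mem_image, Finset.mem_Iio, Prod.mk.injEq, Prod.exists] at h1 h2
    obtain ⟨x', _, _, rfl⟩ := h1
    obtain ⟨i, j, _, _, h⟩ := h2
    exact Fin.succAbove_ne a j h
  rw [invCount, hset, Finset.card_union_of_disjoint hdisj]
  rw [Finset.card_image_of_injective _ (fun x y h => (Prod.mk.injEq _ _ _ _).mp h |>.1),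
    Finset.card_image_of_injective, Fin.card_Iio, invCount]
  rintro ⟨i, j⟩ ⟨i', j'⟩ h
  rw [Prod.mk.injEq] at h
  exact Prod.ext (Fin.succAbove_right_injective h.1) (Fin.succAbove_right_injective h.2)

lemma invCount_ins_last (a : Fin (M+1)) (τ : Equiv.Perm (Fin M)) :
    invCount (ins a (Fin.last M) τ) = (M - a) + invCount τ := by
  classical
  set σ := ins a (Fin.last M) τ with hσ
  have hvs : ∀ i, σ (a.succAbove i) = (τ i).castSucc := by
    intro i; rw [hσ, ins_apply_succAbove, Fin.succAbove_last]
  have hset : (univ.filter (fun p : Fin (M+1) × Fin (M+1) => p.1 < p.2 ∧ σ p.2 < σ p.1))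
      = ((Finset.Ioi a).image (fun y => (a, y))) ∪
        ((univ.filter (fun p : Fin M × Fin M => p.1 < p.2 ∧ τ p.2 < τ p.1)).image
          (fun p => (a.succAbove p.1, a.succAbove p.2))) := by
    ext ⟨x, y⟩
    simp only [mem_filter, mem_univ, true_and, mem_union, mem_image, Finset.mem_Ioi, Prod.mk.injEq,
      Prod.exists]
    constructor
    · rintro ⟨hlt, hinv⟩
      rcases eq_or_ne x a with rfl | hx
      · exact Or.inl ⟨y, hlt, rfl, rfl⟩
      · obtain ⟨i, rfl⟩ := Fin.exists_succAbove_eq hx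
        have hy : y ≠ a := by
          rintro rfl
          rw [ins_apply_self] at hinv
          exact absurd hinv (by simp [Fin.lt_def, Fin.le_def]; omega)
        obtain ⟨j, rfl⟩ := Fin.exists_succAbove_eq hy
        refine Or.inr ⟨i, j, ⟨?_, ?_⟩, rfl, rfl⟩
        · exact (Fin.succAbove_lt_succAbove_iff).mp hlt
        · rw [hvs, hvs] at hinv
          exact (Fin.castSucc_lt_castSucc_iff).mp hinv
    · rintro (⟨y', hy', rfl, rfl⟩ | ⟨i, j, ⟨hij, hji⟩, rfl, rfl⟩)
      · refine ⟨hy', ?_⟩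
        rw [ins_apply_self]
        have hy : y' ≠ a := (ne_of_lt hy').symm
        obtain ⟨j, rfl⟩ := Fin.exists_succAbove_eq hy
        rw [hvs]
        exact Fin.castSucc_lt_last _
      · refine ⟨(Fin.succAbove_lt_succAbove_iff).mpr hij, ?_⟩
        rw [hvs, hvs]
        exact (Fin.castSucc_lt_castSucc_iff).mpr hji
  have hdisj : Disjoint ((Finset.Ioi a).image (fun y => (a, y)))
      ((univ.filter (fun p : Fin M × Fin M => p.1 < p.2 ∧ τ p.2 < τ p.1)).image
        (fun p => (a.succAbove p.1, a.succAbove p.2))) := by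
    rw [Finset.disjoint_left]
    rintro ⟨x, y⟩ h1 h2
    simp only [mem_image, Finset.mem_Ioi, Prod.mk.injEq, Prod.exists] at h1 h2
    obtain ⟨y', _, rfl, _⟩ := h1
    obtain ⟨i, j, _, h, _⟩ := h2
    exact Fin.succAbove_ne a i h
  have hinj : Function.Injective
      (fun p : Fin M × Fin M => (a.succAbove p.1, a.succAbove p.2)) := by
    rintro ⟨i, j⟩ ⟨i', j'⟩ h
    rw [Prod.mk.injEq] at h
    exact Prod.ext (Fin.succAbove_right_injective h.1) (Fin.succAbove_right_injective h.2)
  rw [invCount, hset, Finset.card_union_of_disjoint hdisj,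
    Finset.card_image_of_injective _ (fun x y h => (Prod.mk.injEq _ _ _ _).mp h |>.2),
    Finset.card_image_of_injective _ hinj, Fin.card_Ioi, invCount]
  omega


lemma sum_pow_invCount (n : ℕ) (θ : ℝ) :
    ∑ σ : Equiv.Perm (Fin n), θ ^ invCount σ = qfact n θ := by
  induction n with
  | zero =>
    have h0 : ∀ σ : Equiv.Perm (Fin 0), invCount σ = 0 := by
      intro σ; simp [invCount]
    simp [qfact, h0]
  | succ n ih =>
    have := Fintype.sum_bijective _ (ins_bijective (M := n) 0)
      (fun x : Fin (n+1) × Equiv.Perm (Fin n) => θ ^ ((x.1 : ℕ) + invCount x.2))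
      (fun σ => θ ^ invCount σ)
      (fun x => by rw [invCount_ins_zero])
    rw [← this, Fintype.sum_prod_type, qfact, Finset.prod_range_succ, ← qfact]
    have : ∀ a : Fin (n+1), ∑ τ : Equiv.Perm (Fin n), θ ^ ((a : ℕ) + invCount τ)
        = θ ^ (a : ℕ) * qfact n θ := by
      intro a
      rw [← ih, Finset.mul_sum]
      exact Finset.sum_congr rfl fun τ _ => pow_add θ _ _
    rw [Finset.sum_congr rfl fun a _ => this a, ← Finset.sum_mul, mul_comm]
    congr 1
    rw [tA, ← Fin.sum_univ_eq_sum_range]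

lemma sum_max_at (n : ℕ) (m : Fin (n+1)) (θ : ℝ) :
    ∑ σ ∈ Finset.univ.filter
        (fun σ : Equiv.Perm (Fin (n+1)) => ∀ i, σ i ≤ σ m), θ ^ invCount σ
      = θ ^ (n - (m : ℕ)) * qfact n θ := by
  classical
  rw [← sum_pow_invCount n θ, Finset.mul_sum]
  rw [eq_comm]
  refine Finset.sum_bij (fun τ _ => ins m (Fin.last n) τ) ?_ ?_ ?_ ?_
  · intro τ _
    simp only [Finset.mem_filter, Finset.mem_univ, true_and]
    intro i
    rw [ins_apply_self]
    exact Fin.le_last _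
  · intro τ _ τ' _ h
    have := (ins_bijective (M := n) (Fin.last n)).1 (a₁ := (m, τ)) (a₂ := (m, τ')) h
    exact congrArg Prod.snd this
  · intro σ hσ
    simp only [Finset.mem_filter, Finset.mem_univ, true_and] at hσ
    obtain ⟨⟨a, τ⟩, h⟩ := (ins_bijective (M := n) (Fin.last n)).2 σ
    simp only at h
    have ha : σ a = Fin.last n := by rw [← h, ins_apply_self]
    have hm : σ m = Fin.last n := le_antisymm (Fin.le_last _) (ha ▸ hσ a)
    have : a = m := σ.injective (ha.trans hm.symm)
    subst this
    exact ⟨τ, Finset.mem_univ _, h⟩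
  · intro τ _
    rw [invCount_ins_last, pow_add]

lemma kwinnable_iff {n k : ℕ} (σ : Equiv.Perm (Fin n)) :
    KWinnable k σ ↔ ∃ j : Fin n, k ≤ (j : ℕ) ∧ (∀ i, σ i ≤ σ j) ∧
      ∀ i : Fin n, k ≤ (i : ℕ) → i < j → ¬ IsLRMax σ i := by
  constructor
  · rintro ⟨j, h1, _, h3, h4⟩; exact ⟨j, h1, h3, h4⟩
  · rintro ⟨j, h1, h3, h4⟩
    refine ⟨j, h1, ?_, h3, h4⟩
    intro i hi
    exact lt_of_le_of_ne (h3 i) (fun h => absurd (σ.injective h) (ne_of_lt hi))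

lemma succAbove_val_cases (p : Fin (M+1)) (i : Fin M) :
    ((i : ℕ) < (p : ℕ) ∧ ((p.succAbove i : Fin (M+1)) : ℕ) = (i : ℕ)) ∨
    ((p : ℕ) ≤ (i : ℕ) ∧ ((p.succAbove i : Fin (M+1)) : ℕ) = (i : ℕ) + 1) := by
  by_cases h : (i : ℕ) < (p : ℕ)
  · left
    refine ⟨h, ?_⟩
    rw [Fin.succAbove_of_castSucc_lt _ _ (by rwa [Fin.lt_def, Fin.coe_castSucc])]
    rfl
  · right
    refine ⟨by omega, ?_⟩
    rw [Fin.succAbove_of_le_castSucc _ _ (by rw [Fin.le_def, Fin.coe_castSucc]; omega)]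
    rfl

lemma isLRMax_ins_succAbove (p : Fin (M+1)) (τ : Equiv.Perm (Fin M)) (i : Fin M) :
    IsLRMax (ins p 0 τ) (p.succAbove i) ↔ IsLRMax τ i := by
  have hvs : ∀ i, ins p 0 τ (p.succAbove i) = (τ i).succ := by
    intro i; rw [ins_apply_succAbove]; exact Fin.zero_succAbove _
  constructor
  · intro H i' hi'
    have := H (p.succAbove i') (Fin.succAbove_lt_succAbove_iff.mpr hi')
    rw [hvs, hvs] at this
    exact Fin.succ_lt_succ_iff.mp this
  · intro H x hx
    rcases eq_or_ne x p with rfl | hxp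
    · rw [ins_apply_self, hvs]
      exact Fin.succ_pos _
    · obtain ⟨i', rfl⟩ := Fin.exists_succAbove_eq hxp
      rw [hvs, hvs]
      exact Fin.succ_lt_succ_iff.mpr (H i' (Fin.succAbove_lt_succAbove_iff.mp hx))

lemma kwinnable_ins_iff {k : ℕ} (hk1 : 1 ≤ k) (hkM : k ≤ M) (p : Fin (M+1))
    (τ : Equiv.Perm (Fin M)) :
    KWinnable k (ins p 0 τ) ↔
      ((KWinnable k τ ∧ ¬ ((p : ℕ) < k ∧ IsLRMax τ ⟨k-1, by omega⟩)) ∨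
       ((p : ℕ) < k ∧ ∀ i, τ i ≤ τ ⟨k-1, by omega⟩)) := by
  have hM : 0 < M := by omega
  set kf : Fin M := ⟨k-1, by omega⟩ with hkf
  have hkfv : (kf : ℕ) = k - 1 := rfl
  have hvs : ∀ i, ins p 0 τ (p.succAbove i) = (τ i).succ := by
    intro i; rw [ins_apply_succAbove]; exact Fin.zero_succAbove _
  rw [kwinnable_iff, kwinnable_iff]
  constructor
  · rintro ⟨j, hkj, hmax, hno⟩
    have hjp : j ≠ p := by
      intro heq
      have h2 := hmax (p.succAbove ⟨0, hM⟩)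
      rw [hvs, heq, ins_apply_self] at h2
      rw [Fin.le_def, Fin.val_succ, Fin.val_zero] at h2
      omega
    obtain ⟨j', rfl⟩ := Fin.exists_succAbove_eq hjp
    have hmax' : ∀ i, τ i ≤ τ j' := by
      intro i
      have := hmax (p.succAbove i)
      rw [hvs, hvs] at this
      exact Fin.succ_le_succ_iff.mp this
    by_cases hj' : k ≤ (j' : ℕ)
    · left
      constructor
      · refine ⟨j', hj', hmax', ?_⟩
        intro i hki hij H
        refine hno (p.succAbove i) ?_ (Fin.succAbove_lt_succAbove_iff.mpr hij)
          ((isLRMax_ins_succAbove p τ i).mpr H)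
        have hc := succAbove_val_cases p i
        omega
      · rintro ⟨hpk, hLR⟩
        have hc := succAbove_val_cases p kf
        have hck : ((p.succAbove kf : Fin (M+1)) : ℕ) = k := by omega
        refine hno (p.succAbove kf) (le_of_eq hck.symm) ?_
          ((isLRMax_ins_succAbove p τ kf).mpr hLR)
        exact Fin.succAbove_lt_succAbove_iff.mpr (by rw [Fin.lt_def]; omega)
    · right
      have hc := succAbove_val_cases p j'
      have hj'eq : (j' : ℕ) = k - 1 ∧ (p : ℕ) < k := by omega
      have hjkf : j' = kf := Fin.ext (by omega)
      subst hjkf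
      exact ⟨hj'eq.2, hmax'⟩
  · rintro (⟨⟨j', hkj', hmax', hno'⟩, hnot⟩ | ⟨hpk, hmax'⟩)
    · refine ⟨p.succAbove j', ?_, ?_, ?_⟩
      · have hc := succAbove_val_cases p j'; omega
      · intro x
        rcases eq_or_ne x p with heq | hx
        · rw [heq, ins_apply_self]; exact Fin.zero_le _
        · obtain ⟨i, rfl⟩ := Fin.exists_succAbove_eq hx
          rw [hvs, hvs]
          exact Fin.succ_le_succ_iff.mpr (hmax' i)
      · intro x hkx hxj HL
        rcases eq_or_ne x p with heq | hx
        · have h0p : (⟨0, by omega⟩ : Fin (M+1)) < x := by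
            rw [Fin.lt_def]; show 0 < (x : ℕ); omega
          have h2 := HL ⟨0, by omega⟩ h0p
          rw [heq, ins_apply_self] at h2
          exact Fin.not_lt_zero _ h2
        · obtain ⟨i, rfl⟩ := Fin.exists_succAbove_eq hx
          have hLRi : IsLRMax τ i := (isLRMax_ins_succAbove p τ i).mp HL
          have hij : i < j' := Fin.succAbove_lt_succAbove_iff.mp hxj
          by_cases hki : k ≤ (i : ℕ)
          · exact hno' i hki hij hLRi
          · have hc := succAbove_val_cases p i
            have heq : (i : ℕ) = k - 1 ∧ (p : ℕ) < k := by omega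
            have hikf : i = kf := Fin.ext (by omega)
            exact hnot ⟨heq.2, hikf ▸ hLRi⟩
    · have hc := succAbove_val_cases p kf
      have hck : ((p.succAbove kf : Fin (M+1)) : ℕ) = k := by omega
      refine ⟨p.succAbove kf, le_of_eq hck.symm, ?_, ?_⟩
      · intro x
        rcases eq_or_ne x p with heq | hx
        · rw [heq, ins_apply_self]; exact Fin.zero_le _
        · obtain ⟨i, rfl⟩ := Fin.exists_succAbove_eq hx
          rw [hvs, hvs]
          exact Fin.succ_le_succ_iff.mpr (hmax' i)
      · intro x hkx hxj _
        rw [Fin.lt_def, hck] at hxj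
        omega

/-- Cycle on positions `[q, k-1]`: sends `k-1 ↦ q` and `i ↦ i+1` for `q ≤ i < k-1`. -/
def cyc (q k : ℕ) (hq : q < k) (hkM : k ≤ M) : Equiv.Perm (Fin M) where
  toFun i := if (i : ℕ) = k - 1 then ⟨q, by omega⟩
    else if h : q ≤ (i : ℕ) ∧ (i : ℕ) < k - 1 then ⟨(i : ℕ) + 1, by omega⟩ else i
  invFun i := if (i : ℕ) = q then ⟨k - 1, by omega⟩
    else if h : q < (i : ℕ) ∧ (i : ℕ) ≤ k - 1 then ⟨(i : ℕ) - 1, by omega⟩ else i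
  left_inv := by
    intro i
    apply Fin.ext
    dsimp only
    split_ifs <;> simp_all <;> omega
  right_inv := by
    intro i
    apply Fin.ext
    dsimp only
    split_ifs <;> simp_all <;> omega

lemma cyc_val_cases (q k : ℕ) (hq : q < k) (hkM : k ≤ M) (i : Fin M) :
    ((i : ℕ) = k - 1 ∧ ((cyc q k hq hkM i : Fin M) : ℕ) = q) ∨
    ((i : ℕ) ≠ k - 1 ∧ q ≤ (i : ℕ) ∧ (i : ℕ) < k - 1 ∧
      ((cyc q k hq hkM i : Fin M) : ℕ) = (i : ℕ) + 1) ∨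
    ((i : ℕ) ≠ k - 1 ∧ ¬(q ≤ (i : ℕ) ∧ (i : ℕ) < k - 1) ∧
      ((cyc q k hq hkM i : Fin M) : ℕ) = (i : ℕ)) := by
  by_cases h1 : (i : ℕ) = k - 1
  · left; exact ⟨h1, by simp [cyc, h1]⟩
  · by_cases h2 : q ≤ (i : ℕ) ∧ (i : ℕ) < k - 1
    · exact Or.inr (Or.inl ⟨h1, h2.1, h2.2, by simp [cyc, h1, h2]⟩)
    · exact Or.inr (Or.inr ⟨h1, h2, by simp [cyc, h1, h2]⟩)

lemma cyc_inv_val_cases (q k : ℕ) (hq : q < k) (hkM : k ≤ M) (i : Fin M) :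
    ((i : ℕ) = q ∧ (((cyc q k hq hkM)⁻¹ i : Fin M) : ℕ) = k - 1) ∨
    ((i : ℕ) ≠ q ∧ q < (i : ℕ) ∧ (i : ℕ) ≤ k - 1 ∧
      (((cyc q k hq hkM)⁻¹ i : Fin M) : ℕ) = (i : ℕ) - 1) ∨
    ((i : ℕ) ≠ q ∧ ¬(q < (i : ℕ) ∧ (i : ℕ) ≤ k - 1) ∧
      (((cyc q k hq hkM)⁻¹ i : Fin M) : ℕ) = (i : ℕ)) := by
  have hsymm : (cyc q k hq hkM)⁻¹ i = (cyc q k hq hkM).symm i := rfl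
  by_cases h1 : (i : ℕ) = q
  · left; exact ⟨h1, by rw [hsymm]; simp [cyc, Equiv.symm, h1]⟩
  · by_cases h2 : q < (i : ℕ) ∧ (i : ℕ) ≤ k - 1
    · exact Or.inr (Or.inl ⟨h1, h2.1, h2.2, by rw [hsymm]; simp [cyc, Equiv.symm, h1, h2]⟩)
    · exact Or.inr (Or.inr ⟨h1, h2, by rw [hsymm]; simp [cyc, Equiv.symm, h1, h2]⟩)

lemma cyc_fix (q k : ℕ) (hq : q < k) (hkM : k ≤ M) (i : Fin M) (hi : k ≤ (i : ℕ)) :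
    cyc q k hq hkM i = i := by
  apply Fin.ext
  have := cyc_val_cases q k hq hkM i
  omega

lemma cyc_apply_top (q k : ℕ) (hq : q < k) (hkM : k ≤ M) (hk1 : 1 ≤ k) :
    cyc q k hq hkM ⟨k - 1, by omega⟩ = ⟨q, by omega⟩ := by
  apply Fin.ext
  have := cyc_val_cases q k hq hkM ⟨k - 1, by omega⟩
  simp only at this ⊢
  omega

lemma kwinnable_mul_right {k : ℕ} (τ c : Equiv.Perm (Fin M))
    (hc : ∀ i : Fin M, k ≤ (i : ℕ) → c i = i) :
    KWinnable k (τ * c) ↔ KWinnable k τ := by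
  have hcinv : ∀ i : Fin M, k ≤ (i : ℕ) → c⁻¹ i = i := by
    intro i h
    conv_lhs => rw [← hc i h]
    exact Equiv.Perm.inv_apply_self c i
  have hlt : ∀ i : Fin M, (i : ℕ) < k → (c i : ℕ) < k := by
    intro i h
    by_contra h'
    push_neg at h'
    have := hc (c i) h'
    have := c.injective this
    omega
  have hltinv : ∀ i : Fin M, (i : ℕ) < k → (c⁻¹ i : ℕ) < k := by
    intro i h
    by_contra h'
    push_neg at h'
    have h2 := hc (c⁻¹ i) h'
    rw [Equiv.Perm.apply_inv_self c] at h2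
    rw [h2] at h
    omega
  have happ : ∀ x : Fin M, (τ * c) x = τ (c x) := fun _ => rfl
  have hLR : ∀ x : Fin M, k ≤ (x : ℕ) → (IsLRMax (τ * c) x ↔ IsLRMax τ x) := by
    intro x hx
    constructor
    · intro H i hi
      have hci : c (c⁻¹ i) = i := Equiv.Perm.apply_inv_self c i
      have hlt2 : c⁻¹ i < x := by
        rcases lt_or_ge (i : ℕ) k with h | h
        · have := hltinv i h
          rw [Fin.lt_def] at hi ⊢
          omega
        · rw [hcinv i h]; exact hi
      have := H (c⁻¹ i) hlt2
      rw [happ, happ, hci, hc x hx] at this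
      exact this
    · intro H i hi
      rw [happ, happ, hc x hx]
      have hlt2 : c i < x := by
        rcases lt_or_ge (i : ℕ) k with h | h
        · have := hlt i h
          rw [Fin.lt_def] at hi ⊢
          omega
        · rw [hc i h]; exact hi
      exact H (c i) hlt2
  rw [kwinnable_iff, kwinnable_iff]
  constructor
  · rintro ⟨j, hkj, hmax, hno⟩
    refine ⟨j, hkj, ?_, ?_⟩
    · intro x
      have := hmax (c⁻¹ x)
      rw [happ, happ, Equiv.Perm.apply_inv_self c, hc j hkj] at this
      exact this
    · intro i hki hij H
      exact hno i hki hij ((hLR i hki).mpr H)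
  · rintro ⟨j, hkj, hmax, hno⟩
    refine ⟨j, hkj, ?_, ?_⟩
    · intro x
      rw [happ, happ, hc j hkj]
      exact hmax (c x)
    · intro i hki hij H
      exact hno i hki hij ((hLR i hki).mp H)

lemma argmax_unique {k : ℕ} (τ : Equiv.Perm (Fin M)) (q q' : Fin M)
    (hq : (q : ℕ) < k) (hq' : (q' : ℕ) < k)
    (h : ∀ i : Fin M, (i : ℕ) < k → τ i ≤ τ q)
    (h' : ∀ i : Fin M, (i : ℕ) < k → τ i ≤ τ q') : q = q' :=
  τ.injective (le_antisymm (h' q hq) (h q' hq'))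

lemma not_kwinnable_of_max_lt {k : ℕ} (hk1 : 1 ≤ k) (hkM : k ≤ M) (τ : Equiv.Perm (Fin M))
    (hmax : ∀ i, τ i ≤ τ ⟨k - 1, by omega⟩) : ¬ KWinnable k τ := by
  rw [kwinnable_iff]
  rintro ⟨j, hkj, hmax', -⟩
  have h1 : τ j = τ ⟨k - 1, by omega⟩ := le_antisymm (hmax j) (hmax' _)
  have h2 := τ.injective h1
  rw [h2] at hkj
  simp at hkj
  omega

lemma invCount_mul_cyc {q k : ℕ} (hq : q < k) (hkM : k ≤ M) (τ : Equiv.Perm (Fin M))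
    (harg : ∀ i : Fin M, (i : ℕ) < k → τ i ≤ τ ⟨q, by omega⟩) :
    invCount τ = invCount (τ * cyc q k hq hkM) + (k - 1 - q) := by
  classical
  set c := cyc q k hq hkM with hc
  set qf : Fin M := ⟨q, by omega⟩ with hqf
  set kf : Fin M := ⟨k - 1, by omega⟩ with hkf
  have hqfv : (qf : ℕ) = q := rfl
  have hkfv : (kf : ℕ) = k - 1 := rfl
  set S := Finset.univ.filter (fun pr : Fin M × Fin M => pr.1 < pr.2 ∧ τ pr.2 < τ pr.1) with hS
  have hsplit := Finset.card_filter_add_card_filter_not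
    (s := S) (p := fun pr : Fin M × Fin M => pr.1 = qf ∧ (pr.2 : ℕ) ≤ k - 1)
  have hspec : (S.filter (fun pr => pr.1 = qf ∧ (pr.2 : ℕ) ≤ k - 1))
      = (Finset.Ioc qf kf).image (fun b => (qf, b)) := by
    ext ⟨x, y⟩
    simp only [hS, Finset.mem_filter, Finset.mem_univ, true_and, Finset.mem_image,
      Finset.mem_Ioc, Prod.mk.injEq]
    constructor
    · rintro ⟨⟨hlt, _⟩, rfl, hy⟩
      exact ⟨y, ⟨hlt, by rw [Fin.le_def]; omega⟩, rfl, rfl⟩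
    · rintro ⟨b, ⟨hb1, hb2⟩, rfl, rfl⟩
      rw [Fin.le_def, hkfv] at hb2
      refine ⟨⟨hb1, ?_⟩, rfl, hb2⟩
      have h1 : τ b ≤ τ qf := harg b (by omega)
      exact lt_of_le_of_ne h1 (fun h => absurd (τ.injective h) (ne_of_gt hb1))
  have hrest : (S.filter (fun pr => ¬(pr.1 = qf ∧ (pr.2 : ℕ) ≤ k - 1))).card
      = invCount (τ * c) := by
    rw [invCount, eq_comm]
    refine Finset.card_nbij' (fun pr => (c pr.1, c pr.2)) (fun pr => (c⁻¹ pr.1, c⁻¹ pr.2))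
      ?_ ?_ ?_ ?_
    · rintro ⟨i, j⟩ hij
      simp only [Finset.mem_coe, Finset.mem_filter, Finset.mem_univ, true_and] at hij
      obtain ⟨hij1, hij2⟩ := hij
      have hci := cyc_val_cases q k hq hkM i
      have hcj := cyc_val_cases q k hq hkM j
      simp only [← hc] at hci hcj
      have hji : τ (c j) < τ (c i) := hij2
      have hlt : c i < c j := by
        by_cases hbad : ((c j : Fin M) : ℕ) = q ∧ ((c i : Fin M) : ℕ) < k
        · exfalso
          have h1 : c j = qf := Fin.ext hbad.1
          have h2 := harg (c i) hbad.2
          rw [← h1] at h2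
          exact absurd hji (not_lt.mpr h2)
        · rw [Fin.lt_def] at hij1 ⊢
          omega
      simp only
      refine Finset.mem_filter.mpr ⟨Finset.mem_filter.mpr ⟨Finset.mem_univ _, ⟨hlt, hji⟩⟩, ?_⟩
      rintro ⟨h1, h2⟩
      have h1' : c i = qf := h1
      have h1v : ((c i : Fin M) : ℕ) = q := by rw [h1']
      have h2v : ((c j : Fin M) : ℕ) ≤ k - 1 := h2
      rw [Fin.lt_def] at hij1
      omega
    · rintro ⟨x, y⟩ hxy
      simp only [Finset.mem_coe, hS, Finset.mem_filter, Finset.mem_univ, true_and] at hxy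
      obtain ⟨⟨hlt, hinv⟩, hnspec⟩ := hxy
      have hcx := cyc_inv_val_cases q k hq hkM x
      have hcy := cyc_inv_val_cases q k hq hkM y
      simp only [← hc] at hcx hcy
      have hyq : (y : ℕ) ≠ q := by
        intro h
        have h1 : y = qf := Fin.ext h
        have h2 : (x : ℕ) < k := by rw [Fin.lt_def, h1, hqfv] at hlt; omega
        have h3 := harg x h2
        rw [← h1] at h3
        exact absurd hinv (not_lt.mpr h3)
      have hxspec : ¬((x : ℕ) = q ∧ (y : ℕ) ≤ k - 1) := by
        intro h
        exact hnspec ⟨Fin.ext h.1, h.2⟩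
      simp only
      refine Finset.mem_filter.mpr ⟨Finset.mem_univ _, ?_, ?_⟩
      · show c⁻¹ x < c⁻¹ y
        rw [Fin.lt_def] at hlt ⊢
        omega
      · show τ (c (c⁻¹ y)) < τ (c (c⁻¹ x))
        rw [Equiv.Perm.apply_inv_self c, Equiv.Perm.apply_inv_self c]
        exact hinv
    · rintro ⟨i, j⟩ _
      simp only [Equiv.Perm.inv_apply_self]
    · rintro ⟨x, y⟩ _
      simp only [Equiv.Perm.apply_inv_self]
  rw [invCount, ← hS, ← hsplit, hspec, ← hrest,
    Finset.card_image_of_injective _ (fun a b h => ((Prod.mk.injEq _ _ _ _).mp h).2),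
    Fin.card_Ioc]
  omega

open Classical in
lemma sum_winnable_eq {k : ℕ} (hk1 : 1 ≤ k) (hkM : k ≤ M) (θ : ℝ) :
    ∑ τ ∈ Finset.univ.filter (fun τ : Equiv.Perm (Fin M) => KWinnable k τ), θ ^ invCount τ
      = tA k θ * ∑ ρ ∈ Finset.univ.filter (fun ρ : Equiv.Perm (Fin M) =>
          KWinnable k ρ ∧ IsLRMax ρ ⟨k - 1, by omega⟩), θ ^ invCount ρ := by
  classical
  have hM : 0 < M := by omega
  set kf : Fin M := ⟨k - 1, by omega⟩ with hkf
  have hkfv : (kf : ℕ) = k - 1 := rfl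
  -- argmax choice
  have hex : ∀ τ : Equiv.Perm (Fin M), ∃ s : Fin M, ((s : ℕ) < k ∧
      ∀ i : Fin M, (i : ℕ) < k → τ i ≤ τ s) := by
    intro τ
    obtain ⟨b, hb, hmax⟩ := Finset.exists_max_image
      (Finset.univ.filter (fun i : Fin M => (i : ℕ) < k)) τ
      ⟨⟨0, hM⟩, by simp; omega⟩
    simp only [Finset.mem_filter, Finset.mem_univ, true_and] at hb hmax
    exact ⟨b, hb, hmax⟩
  choose qOf hq1 hq2 using hex
  have hfix : ∀ (q : ℕ) (hq : q < k), ∀ i : Fin M, k ≤ (i : ℕ) →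
      cyc q k hq hkM i = i := fun q hq => cyc_fix q k hq hkM
  have hfixinv : ∀ (q : ℕ) (hq : q < k), ∀ i : Fin M, k ≤ (i : ℕ) →
      (cyc q k hq hkM)⁻¹ i = i := by
    intro q hq i hi
    conv_lhs => rw [← hfix q hq i hi]
    exact Equiv.Perm.inv_apply_self (cyc q k hq hkM) i
  rw [tA, Finset.sum_mul_sum, ← Finset.sum_product']
  refine Finset.sum_nbij'
    (fun τ => (k - 1 - (qOf τ : ℕ), τ * cyc (qOf τ : ℕ) k (hq1 τ) hkM))
    (fun p => p.2 * (cyc (k - 1 - p.1) k (by omega) hkM)⁻¹) ?_ ?_ ?_ ?_ ?_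
  · -- maps into product set
    intro τ hτ
    simp only [Finset.mem_filter, Finset.mem_univ, true_and] at hτ
    simp only [Finset.mem_product, Finset.mem_range, Finset.mem_filter, Finset.mem_univ, true_and]
    set q : ℕ := (qOf τ : ℕ)
    set c := cyc q k (hq1 τ) hkM with hc
    refine ⟨?_, ?_, ?_⟩
    · omega
    · exact (kwinnable_mul_right τ c (hfix q (hq1 τ))).mpr hτ
    · -- IsLRMax (τ * c) kf
      intro x hx
      have hckf : c kf = qOf τ := by
        have := cyc_apply_top q k (hq1 τ) hkM hk1
        rw [hc, hkf, this]
      have h1 : (τ * c) kf = τ (qOf τ) := by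
        show τ (c kf) = τ (qOf τ); rw [hckf]
      have hcx := cyc_val_cases q k (hq1 τ) hkM x
      simp only [← hc] at hcx
      have hcxk : ((c x : Fin M) : ℕ) < k := by
        rw [Fin.lt_def, hkfv] at hx
        omega
      have h2 : τ (c x) ≤ τ (qOf τ) := hq2 τ (c x) hcxk
      have hne : c x ≠ qOf τ := by
        intro h
        have : x = kf := c.injective (h.trans hckf.symm)
        rw [this] at hx
        exact lt_irrefl _ hx
      show τ (c x) < (τ * c) kf
      rw [h1]
      exact lt_of_le_of_ne h2 (fun h => hne (τ.injective h))
  · -- backward maps into winnable set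
    rintro ⟨m, ρ⟩ hp
    simp only [Finset.mem_product, Finset.mem_range, Finset.mem_filter, Finset.mem_univ,
      true_and] at hp
    obtain ⟨hm, hρw, _⟩ := hp
    simp only [Finset.mem_filter, Finset.mem_univ, true_and]
    exact (kwinnable_mul_right ρ _ (hfixinv (k - 1 - m) (by omega))).mpr hρw
  · -- left inverse
    intro τ hτ
    simp only
    have harg : k - 1 - (k - 1 - (qOf τ : ℕ)) = (qOf τ : ℕ) := by
      have := hq1 τ; omega
    simp only [harg]
    exact mul_inv_cancel_right _ _
  · -- right inverse
    rintro ⟨m, ρ⟩ hp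
    simp only [Finset.mem_product, Finset.mem_range, Finset.mem_filter, Finset.mem_univ,
      true_and] at hp
    obtain ⟨hm, hρw, hρLR⟩ := hp
    set q' : ℕ := k - 1 - m with hq'
    have hq'k : q' < k := by omega
    set c := cyc q' k hq'k hkM with hc
    set τ : Equiv.Perm (Fin M) := ρ * c⁻¹ with hτ
    set qf' : Fin M := ⟨q', by omega⟩ with hqf'
    have hckf : c kf = qf' := by
      have := cyc_apply_top q' k hq'k hkM hk1
      rw [hc, hkf, hqf', this]
    have hcinvqf : c⁻¹ qf' = kf := by rw [← hckf]; exact Equiv.Perm.inv_apply_self c kf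
    have hτqf : τ qf' = ρ kf := by show ρ (c⁻¹ qf') = ρ kf; rw [hcinvqf]
    -- qf' is the argmax of τ
    have hargm : ∀ x : Fin M, (x : ℕ) < k → τ x ≤ τ qf' := by
      intro x hx
      have hcx := cyc_inv_val_cases q' k hq'k hkM x
      simp only [← hc] at hcx
      have hcxle : ((c⁻¹ x : Fin M) : ℕ) ≤ k - 1 := by omega
      show ρ (c⁻¹ x) ≤ τ qf'
      rw [hτqf]
      rcases eq_or_ne (c⁻¹ x) kf with h | h
      · rw [h]
      · have hlt : c⁻¹ x < kf := by
          rw [Fin.lt_def, hkfv]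
          have : ((c⁻¹ x : Fin M) : ℕ) ≠ k - 1 := fun hh => h (Fin.ext hh)
          omega
        exact le_of_lt (hρLR _ hlt)
    have hqf'v : (qf' : ℕ) = q' := rfl
    have hqeq : qOf τ = qf' := argmax_unique τ (qOf τ) qf' (hq1 τ) (by omega) (hq2 τ) hargm
    have hqv : (qOf τ : ℕ) = q' := by rw [hqeq]
    refine Prod.ext ?_ ?_
    · simp only [hqv]
      omega
    · simp only [hqv]
      show τ * cyc q' k _ hkM = ρ
      rw [← hc, hτ]
      exact inv_mul_cancel_right _ _
  · -- weights
    intro τ hτ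
    simp only
    rw [invCount_mul_cyc (hq1 τ) hkM τ (by
      intro i hi
      exact hq2 τ i hi), pow_add, mul_comm]

lemma tA_succ (n : ℕ) (θ : ℝ) : tA (n + 1) θ = 1 + θ * tA n θ := by
  rw [tA, tA, Finset.sum_range_succ', Finset.mul_sum]
  simp only [pow_zero, pow_succ, mul_comm]
  ring_nf

lemma ite_key {a b c d : Prop} [Decidable a] [Decidable b] [Decidable c] [Decidable d]
    (hda : d → ¬ a) (v : ℝ) :
    (if (a ∧ ¬(b ∧ c)) ∨ (b ∧ d) then v else 0)
      = ((if a then v else 0) - (if (a ∧ c) ∧ b then v else 0)) + (if b ∧ d then v else 0) := by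
  by_cases hd : d
  · have hna := hda hd
    by_cases hb : b <;> simp [hb, hd, hna]
  · by_cases ha : a <;> by_cases hb : b <;> by_cases hc : c <;> simp [ha, hb, hc, hd]

lemma sum_ite_lt_pow (n k : ℕ) (hk : k ≤ n) (θ : ℝ) :
    ∑ p : Fin n, (if (p : ℕ) < k then θ ^ (p : ℕ) else 0) = tA k θ := by
  rw [Fin.sum_univ_eq_sum_range (fun i => if i < k then θ ^ i else 0) n, ← Finset.sum_filter]
  have : (Finset.range n).filter (fun i => i < k) = Finset.range k := by
    ext i
    simp only [Finset.mem_filter, Finset.mem_range]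
    omega
  rw [this, tA]

/-- recurrence for the Mallows-weighted count:
`W(N,k) = θ·[N−1]_θ·W(N−1,k) + θ^{N−k−1}·[k]_θ·[N−2]_θ!` for `1 ≤ k < N`,
with `W(1,0) = 1` and `W(N,N) = 0`. -/
theorem mallows_W_recurrence :
    (∀ N k : ℕ, ∀ θ : ℝ, 1 ≤ k → k < N →
      WM N k θ = θ * tA (N - 1) θ * WM (N - 1) k θ +
        θ ^ (N - k - 1) * tA k θ * qfact (N - 2) θ) ∧
    (∀ θ : ℝ, WM 1 0 θ = 1) ∧
    (∀ N : ℕ, ∀ θ : ℝ, WM N N θ = 0) := by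
  refine ⟨?_, ?_, ?_⟩
  · intro N k θ hk1 hkN
    classical
    obtain ⟨m, rfl⟩ : ∃ m, N = m + 2 := ⟨N - 2, by omega⟩
    have hkM : k ≤ m + 1 := by omega
    have hred : m + 2 - 1 = m + 1 := rfl
    have hred2 : m + 2 - 2 = m := rfl
    have hredk : m + 2 - k - 1 = m + 1 - k := by omega
    rw [hred, hred2, hredk]
    set kf : Fin (m+1) := ⟨k - 1, by omega⟩ with hkf
    -- step 1 : reindex by insertion
    have h1 : WM (m+2) k θ = ∑ x : Fin (m+2) × Equiv.Perm (Fin (m+1)),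
        (if KWinnable k (ins x.1 0 x.2) then θ ^ ((x.1 : ℕ) + invCount x.2) else 0) := by
      rw [WM, Finset.sum_filter]
      exact (Fintype.sum_bijective _ (ins_bijective 0)
        (fun x : Fin (m+2) × Equiv.Perm (Fin (m+1)) =>
          if KWinnable k (ins x.1 0 x.2) then θ ^ ((x.1 : ℕ) + invCount x.2) else 0)
        (fun σ => if KWinnable k σ then θ ^ invCount σ else 0)
        (fun x => by rw [invCount_ins_zero])).symm
    -- step 2 : pointwise split of the winnability condition
    have h2 : ∀ x : Fin (m+2) × Equiv.Perm (Fin (m+1)),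
        (if KWinnable k (ins x.1 0 x.2) then θ ^ ((x.1 : ℕ) + invCount x.2) else 0)
        = ((if KWinnable k x.2 then θ ^ ((x.1 : ℕ) + invCount x.2) else 0)
            - (if (KWinnable k x.2 ∧ IsLRMax x.2 kf) ∧ (x.1 : ℕ) < k
                then θ ^ ((x.1 : ℕ) + invCount x.2) else 0))
          + (if (x.1 : ℕ) < k ∧ (∀ i, x.2 i ≤ x.2 kf)
                then θ ^ ((x.1 : ℕ) + invCount x.2) else 0) := by
      intro x
      have hcond : KWinnable k (ins x.1 0 x.2) ↔
          ((KWinnable k x.2 ∧ ¬ ((x.1 : ℕ) < k ∧ IsLRMax x.2 kf)) ∨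
           ((x.1 : ℕ) < k ∧ ∀ i, x.2 i ≤ x.2 kf)) := kwinnable_ins_iff hk1 hkM x.1 x.2
      exact (if_congr hcond rfl rfl).trans
        (ite_key (fun hd => not_kwinnable_of_max_lt hk1 hkM x.2 hd) _)
    rw [h1, Finset.sum_congr rfl (fun x _ => h2 x), Finset.sum_add_distrib,
      Finset.sum_sub_distrib]
    -- the three sums
    have hA : ∑ x : Fin (m+2) × Equiv.Perm (Fin (m+1)),
        (if KWinnable k x.2 then θ ^ ((x.1 : ℕ) + invCount x.2) else 0)
        = tA (m+2) θ * WM (m+1) k θ := by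
      rw [Fintype.sum_prod_type]
      have hinner : ∀ p : Fin (m+2),
          ∑ τ : Equiv.Perm (Fin (m+1)), (if KWinnable k τ then θ ^ ((p : ℕ) + invCount τ) else 0)
          = θ ^ (p : ℕ) * ∑ τ : Equiv.Perm (Fin (m+1)),
              (if KWinnable k τ then θ ^ invCount τ else 0) := by
        intro p
        rw [Finset.mul_sum]
        refine Finset.sum_congr rfl (fun τ _ => ?_)
        split_ifs
        · rw [pow_add]
        · ring
      rw [Finset.sum_congr rfl (fun p _ => hinner p), ← Finset.sum_mul]
      congr 1
      · rw [tA, ← Fin.sum_univ_eq_sum_range]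
      · rw [WM, Finset.sum_filter]
    have hB : ∑ x : Fin (m+2) × Equiv.Perm (Fin (m+1)),
        (if (KWinnable k x.2 ∧ IsLRMax x.2 kf) ∧ (x.1 : ℕ) < k
            then θ ^ ((x.1 : ℕ) + invCount x.2) else 0)
        = WM (m+1) k θ := by
      rw [Fintype.sum_prod_type]
      have hpt : ∀ (p : Fin (m+2)) (τ : Equiv.Perm (Fin (m+1))),
          (if (KWinnable k τ ∧ IsLRMax τ kf) ∧ (p : ℕ) < k
              then θ ^ ((p : ℕ) + invCount τ) else 0)
          = (if (p : ℕ) < k then θ ^ (p : ℕ) else 0)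
            * (if KWinnable k τ ∧ IsLRMax τ kf then θ ^ invCount τ else 0) := by
        intro p τ
        by_cases hX : KWinnable k τ ∧ IsLRMax τ kf <;> by_cases hpb : (p : ℕ) < k <;>
          simp [hX, hpb, pow_add]
      simp only [hpt]
      rw [← Finset.sum_mul_sum, sum_ite_lt_pow (m+2) k (by omega) θ]
      have := sum_winnable_eq (M := m + 1) hk1 hkM θ
      rw [WM, this, Finset.sum_filter]
    have hC : ∑ x : Fin (m+2) × Equiv.Perm (Fin (m+1)),
        (if (x.1 : ℕ) < k ∧ (∀ i, x.2 i ≤ x.2 kf)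
            then θ ^ ((x.1 : ℕ) + invCount x.2) else 0)
        = tA k θ * (θ ^ (m + 1 - k) * qfact m θ) := by
      rw [Fintype.sum_prod_type]
      have hpt : ∀ (p : Fin (m+2)) (τ : Equiv.Perm (Fin (m+1))),
          (if (p : ℕ) < k ∧ (∀ i, τ i ≤ τ kf) then θ ^ ((p : ℕ) + invCount τ) else 0)
          = (if (p : ℕ) < k then θ ^ (p : ℕ) else 0)
            * (if (∀ i, τ i ≤ τ kf) then θ ^ invCount τ else 0) := by
        intro p τ
        by_cases hX : ∀ i, τ i ≤ τ kf <;> by_cases hpb : (p : ℕ) < k <;>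
          simp [hX, hpb, pow_add]
      simp only [hpt]
      rw [← Finset.sum_mul_sum, sum_ite_lt_pow (m+2) k (by omega) θ]
      congr 1
      have := sum_max_at m kf θ
      rw [Finset.sum_filter] at this
      rw [this]
      congr 2
      simp only [hkf]
      omega
    rw [hA, hB, hC, tA_succ]
    ring
  · intro θ
    classical
    rw [WM]
    have hfil : (Finset.univ.filter (fun π : Equiv.Perm (Fin 1) => KWinnable 0 π))
        = Finset.univ := by
      refine Finset.filter_true_of_mem (fun π _ => ?_)
      refine ⟨0, Nat.zero_le _, ?_, ?_, ?_⟩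
      · intro i hi
        rw [Fin.lt_def] at hi
        omega
      · intro i
        rw [Subsingleton.elim i 0]
      · intro i _ hi
        rw [Fin.lt_def] at hi
        omega
    rw [hfil, sum_pow_invCount 1 θ]
    simp [qfact, tA]
  · intro N θ
    classical
    rw [WM]
    have hfil : (Finset.univ.filter (fun π : Equiv.Perm (Fin N) => KWinnable N π))
        = ∅ := by
      refine Finset.filter_false_of_mem (fun π _ => ?_)
      rintro ⟨j, hj, -, -, -⟩
      exact absurd hj (by have := j.isLt; omega)
    rw [hfil, Finset.sum_empty]
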